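/- Affine normalization maps a reduction step to a complete reduction step: if M → N, and M_aff, N_aff are affine normal forms of M and N respectively, then M_aff ⇛ N_aff. -/

import Mathlib

variable {Loc Ch : Type}

/-- FMC terms: variable, push `[N]a.M`, pop `a<x>.M` (de Bruijn binder),
choice `i`, case `M ; i -> N`, and loop `M^i`. -/
inductive Tm (Loc Ch : Type) : Type where
  | var : ℕ → Tm Loc Ch
  | push : Tm Loc Ch → Loc → Tm Loc Ch → Tm Loc Ch
  | pop : Loc → Tm Loc Ch → Tm Loc Ch
  | choice : Ch → Tm Loc Ch
  | caseOf : Tm Loc Ch → Ch → Tm Loc Ch → Tm Loc Ch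
  | loop : Tm Loc Ch → Ch → Tm Loc Ch

namespace Tm

/-- Shift the free de Bruijn indices `≥ d` up by one. -/
def lift : Tm Loc Ch → ℕ → Tm Loc Ch
  | var n, d => if n < d then var n else var (n + 1)
  | push N a M, d => push (N.lift d) a (M.lift d)
  | pop a M, d => pop a (M.lift (d + 1))
  | choice i, _ => choice i
  | caseOf M i N, d => caseOf (M.lift d) i (N.lift d)
  | loop M i, d => loop (M.lift d) i

/-- Capture-avoiding substitution `{N/k}M` for the de Bruijn index `k`. -/
def subst : Tm Loc Ch → ℕ → Tm Loc Ch → Tm Loc Ch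
  | var n, k, N => if n = k then N else if n < k then var n else var (n - 1)
  | push P a M, k, N => push (P.subst k N) a (M.subst k N)
  | pop a M, k, N => pop a (M.subst (k + 1) (N.lift 0))
  | choice i, _, _ => choice i
  | caseOf M i P, k, N => caseOf (M.subst k N) i (P.subst k N)
  | loop M i, k, N => loop (M.subst k N) i

end Tm

/-- Reduction: the closure under arbitrary contexts of the rules
beta, passage, select, reject, prefix(pop), prefix(push), associate, unroll. -/
inductive Step : Tm Loc Ch → Tm Loc Ch → Prop where
  | beta (N : Tm Loc Ch) (a : Loc) (M : Tm Loc Ch) :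
      Step (.push N a (.pop a M)) (M.subst 0 N)
  | passage (N : Tm Loc Ch) (a b : Loc) (M : Tm Loc Ch) (h : a ≠ b) :
      Step (.push N b (.pop a M)) (.pop a (.push (N.lift 0) b M))
  | select (i : Ch) (M : Tm Loc Ch) :
      Step (.caseOf (.choice i) i M) M
  | reject (i j : Ch) (M : Tm Loc Ch) (h : i ≠ j) :
      Step (.caseOf (.choice i) j M) (.choice i)
  | prefixPop (a : Loc) (N : Tm Loc Ch) (i : Ch) (M : Tm Loc Ch) :
      Step (.caseOf (.pop a N) i M) (.pop a (.caseOf N i (M.lift 0)))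
  | prefixPush (P : Tm Loc Ch) (a : Loc) (N : Tm Loc Ch) (i : Ch) (M : Tm Loc Ch) :
      Step (.caseOf (.push P a N) i M) (.push P a (.caseOf N i M))
  | assoc (P : Tm Loc Ch) (i : Ch) (N M : Tm Loc Ch) :
      Step (.caseOf (.caseOf P i N) i M) (.caseOf P i (.caseOf N i M))
  | unroll (M : Tm Loc Ch) (i : Ch) :
      Step (.loop M i) (.caseOf M i (.loop M i))
  | push_left (N N' : Tm Loc Ch) (a : Loc) (M : Tm Loc Ch) :
      Step N N' → Step (.push N a M) (.push N' a M)
  | push_right (N : Tm Loc Ch) (a : Loc) (M M' : Tm Loc Ch) :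
      Step M M' → Step (.push N a M) (.push N a M')
  | pop_body (a : Loc) (M M' : Tm Loc Ch) :
      Step M M' → Step (.pop a M) (.pop a M')
  | case_left (M M' : Tm Loc Ch) (i : Ch) (N : Tm Loc Ch) :
      Step M M' → Step (.caseOf M i N) (.caseOf M' i N)
  | case_right (M : Tm Loc Ch) (i : Ch) (N N' : Tm Loc Ch) :
      Step N N' → Step (.caseOf M i N) (.caseOf M i N')
  | loop_body (M M' : Tm Loc Ch) (i : Ch) :
      Step M M' → Step (.loop M i) (.loop M' i)

/-- Affine reduction: the contextual closure of the rules passage, select,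
reject, prefix(pop), prefix(push), associate. -/
inductive AffStep : Tm Loc Ch → Tm Loc Ch → Prop where
  | passage (N : Tm Loc Ch) (a b : Loc) (M : Tm Loc Ch) (h : a ≠ b) :
      AffStep (.push N b (.pop a M)) (.pop a (.push (N.lift 0) b M))
  | select (i : Ch) (M : Tm Loc Ch) :
      AffStep (.caseOf (.choice i) i M) M
  | reject (i j : Ch) (M : Tm Loc Ch) (h : i ≠ j) :
      AffStep (.caseOf (.choice i) j M) (.choice i)
  | prefixPop (a : Loc) (N : Tm Loc Ch) (i : Ch) (M : Tm Loc Ch) :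
      AffStep (.caseOf (.pop a N) i M) (.pop a (.caseOf N i (M.lift 0)))
  | prefixPush (P : Tm Loc Ch) (a : Loc) (N : Tm Loc Ch) (i : Ch) (M : Tm Loc Ch) :
      AffStep (.caseOf (.push P a N) i M) (.push P a (.caseOf N i M))
  | assoc (P : Tm Loc Ch) (i : Ch) (N M : Tm Loc Ch) :
      AffStep (.caseOf (.caseOf P i N) i M) (.caseOf P i (.caseOf N i M))
  | push_left (N N' : Tm Loc Ch) (a : Loc) (M : Tm Loc Ch) :
      AffStep N N' → AffStep (.push N a M) (.push N' a M)
  | push_right (N : Tm Loc Ch) (a : Loc) (M M' : Tm Loc Ch) :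
      AffStep M M' → AffStep (.push N a M) (.push N a M')
  | pop_body (a : Loc) (M M' : Tm Loc Ch) :
      AffStep M M' → AffStep (.pop a M) (.pop a M')
  | case_left (M M' : Tm Loc Ch) (i : Ch) (N : Tm Loc Ch) :
      AffStep M M' → AffStep (.caseOf M i N) (.caseOf M' i N)
  | case_right (M : Tm Loc Ch) (i : Ch) (N N' : Tm Loc Ch) :
      AffStep N N' → AffStep (.caseOf M i N) (.caseOf M i N')
  | loop_body (M M' : Tm Loc Ch) (i : Ch) :
      AffStep M M' → AffStep (.loop M i) (.loop M' i)

/-- Parallel duplicating reduction `M ⇒_dup N`: `N` is the marked reduct of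
`M` for some marking of beta- and unroll-redexes. -/
inductive Par : Tm Loc Ch → Tm Loc Ch → Prop where
  | var (n : ℕ) : Par (.var n) (.var n)
  | choice (i : Ch) : Par (.choice i) (.choice i)
  | push (N N' : Tm Loc Ch) (a : Loc) (M M' : Tm Loc Ch) :
      Par N N' → Par M M' → Par (.push N a M) (.push N' a M')
  | pop (a : Loc) (M M' : Tm Loc Ch) :
      Par M M' → Par (.pop a M) (.pop a M')
  | caseOf (M M' : Tm Loc Ch) (i : Ch) (N N' : Tm Loc Ch) :
      Par M M' → Par N N' → Par (.caseOf M i N) (.caseOf M' i N')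
  | loop (M M' : Tm Loc Ch) (i : Ch) :
      Par M M' → Par (.loop M i) (.loop M' i)
  | beta (N N' : Tm Loc Ch) (a : Loc) (M M' : Tm Loc Ch) :
      Par N N' → Par M M' → Par (.push N a (.pop a M)) (M'.subst 0 N')
  | unroll (M M' : Tm Loc Ch) (i : Ch) :
      Par M M' → Par (.loop M i) (.caseOf M' i (.loop M' i))

/-- `P` is an affine normal form of `M`. -/
def AffNF (M P : Tm Loc Ch) : Prop :=
  Relation.ReflTransGen AffStep M P ∧ ∀ Q, ¬ AffStep P Q

/-- Complete reduction `M ⇛ N`: a parallel duplicating step followed by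
affine normalization. -/
def Comp (M N : Tm Loc Ch) : Prop :=
  ∃ P, Par M P ∧ AffNF P N

namespace Tm

theorem lift_lift (M : Tm Loc Ch) : ∀ d d', d' ≤ d →
    (M.lift d).lift d' = (M.lift d').lift (d+1) := by
  induction M with
  | var n =>
      intro d d' h
      simp only [lift]
      split_ifs <;> simp only [lift] <;> split_ifs <;>
        first | rfl | (exfalso; omega) | (congr 1; omega)
  | push N a M ihN ihM => intro d d' h; simp [lift, ihN _ _ h, ihM _ _ h]
  | pop a M ih => intro d d' h; simp [lift, ih (d+1) (d'+1) (by omega)]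
  | choice i => intros; simp [lift]
  | caseOf M i N ihM ihN => intro d d' h; simp [lift, ihM _ _ h, ihN _ _ h]
  | loop M i ih => intro d d' h; simp [lift, ih _ _ h]

theorem subst_lift_self (M : Tm Loc Ch) : ∀ k N, (M.lift k).subst k N = M := by
  induction M with
  | var n =>
      intro k N
      simp only [lift]
      split_ifs <;> simp only [subst] <;> split_ifs <;>
        first | rfl | (exfalso; omega) | (congr 1; omega)
  | push N a M ihN ihM => intro k N'; simp [lift, subst, ihN, ihM]
  | pop a M ih => intro k N; simp [lift, subst, ih]
  | choice i => intros; simp [lift, subst]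
  | caseOf M i N ihM ihN => intro k N'; simp [lift, subst, ihM, ihN]
  | loop M i ih => intro k N; simp [lift, subst, ih]

theorem lift_subst_low (M : Tm Loc Ch) : ∀ k N d, d ≤ k →
    (M.subst k N).lift d = (M.lift d).subst (k+1) (N.lift d) := by
  induction M with
  | var n =>
      intro k N d h
      simp only [lift, subst]
      split_ifs <;> simp only [lift, subst] <;> split_ifs <;>
        first | rfl | (exfalso; omega) | (congr 1; omega)
  | push P a M ihP ihM => intro k N d h; simp [lift, subst, ihP _ _ _ h, ihM _ _ _ h]
  | pop a M ih =>
      intro k N d h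
      simp [lift, subst, ih (k+1) (N.lift 0) (d+1) (by omega), lift_lift N d 0 (by omega)]
  | choice i => intros; simp [lift, subst]
  | caseOf M i P ihM ihP => intro k N d h; simp [lift, subst, ihM _ _ _ h, ihP _ _ _ h]
  | loop M i ih => intro k N d h; simp [lift, subst, ih _ _ _ h]

theorem lift_subst_high (M : Tm Loc Ch) : ∀ k N d, k ≤ d →
    (M.subst k N).lift d = (M.lift (d+1)).subst k (N.lift d) := by
  induction M with
  | var n =>
      intro k N d h
      simp only [lift, subst]
      split_ifs <;> simp only [lift, subst] <;> split_ifs <;>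
        first | rfl | (exfalso; omega) | (congr 1; omega)
  | push P a M ihP ihM => intro k N d h; simp [lift, subst, ihP _ _ _ h, ihM _ _ _ h]
  | pop a M ih =>
      intro k N d h
      simp [lift, subst, ih (k+1) (N.lift 0) (d+1) (by omega), lift_lift N d 0 (by omega)]
  | choice i => intros; simp [lift, subst]
  | caseOf M i P ihM ihP => intro k N d h; simp [lift, subst, ihM _ _ _ h, ihP _ _ _ h]
  | loop M i ih => intro k N d h; simp [lift, subst, ih _ _ _ h]

end Tm
open Tm

/-- Affine star. -/
abbrev AStar : Tm Loc Ch → Tm Loc Ch → Prop := Relation.ReflTransGen AffStep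

theorem AffStep.lift {M M' : Tm Loc Ch} (h : AffStep M M') :
    ∀ d, AffStep (M.lift d) (M'.lift d) := by
  induction h with
  | passage N a b M hab =>
      intro d
      simpa [Tm.lift, lift_lift N d 0 (by omega)] using
        AffStep.passage (N.lift d) a b (M.lift (d+1)) hab
  | select i M => intro d; exact AffStep.select i (M.lift d)
  | reject i j M hij => intro d; exact AffStep.reject i j (M.lift d) hij
  | prefixPop a N i M =>
      intro d
      simpa [Tm.lift, lift_lift M d 0 (by omega)] using
        AffStep.prefixPop a (N.lift (d+1)) i (M.lift d)
  | prefixPush P a N i M => intro d; exact AffStep.prefixPush _ _ _ _ _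
  | assoc P i N M => intro d; exact AffStep.assoc _ _ _ _
  | push_left N N' a M h ih => intro d; exact AffStep.push_left _ _ _ _ (ih d)
  | push_right N a M M' h ih => intro d; exact AffStep.push_right _ _ _ _ (ih d)
  | pop_body a M M' h ih => intro d; exact AffStep.pop_body _ _ _ (ih (d+1))
  | case_left M M' i N h ih => intro d; exact AffStep.case_left _ _ _ _ (ih d)
  | case_right M i N N' h ih => intro d; exact AffStep.case_right _ _ _ _ (ih d)
  | loop_body M M' i h ih => intro d; exact AffStep.loop_body _ _ _ (ih d)

/-- Affine step in the body, under substitution. -/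
theorem AffStep.subst_left {M M' : Tm Loc Ch} (h : AffStep M M') :
    ∀ k (N : Tm Loc Ch), AffStep (M.subst k N) (M'.subst k N) := by
  induction h with
  | passage P a b M hab =>
      intro k N
      simpa [Tm.subst, lift_subst_low P k N 0 (by omega)] using
        AffStep.passage (P.subst k N) a b (M.subst (k+1) (N.lift 0)) hab
  | select i M => intro k N; exact AffStep.select i (M.subst k N)
  | reject i j M hij => intro k N; exact AffStep.reject i j (M.subst k N) hij
  | prefixPop a P i M =>
      intro k N
      simpa [Tm.subst, lift_subst_low M k N 0 (by omega)] using
        AffStep.prefixPop a (P.subst (k+1) (N.lift 0)) i (M.subst k N)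
  | prefixPush P a Q i M => intro k N; exact AffStep.prefixPush _ _ _ _ _
  | assoc P i Q M => intro k N; exact AffStep.assoc _ _ _ _
  | push_left P P' a M h ih => intro k N; exact AffStep.push_left _ _ _ _ (ih k N)
  | push_right P a M M' h ih => intro k N; exact AffStep.push_right _ _ _ _ (ih k N)
  | pop_body a M M' h ih => intro k N; exact AffStep.pop_body _ _ _ (ih (k+1) (N.lift 0))
  | case_left M M' i P h ih => intro k N; exact AffStep.case_left _ _ _ _ (ih k N)
  | case_right M i P P' h ih => intro k N; exact AffStep.case_right _ _ _ _ (ih k N)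
  | loop_body M M' i h ih => intro k N; exact AffStep.loop_body _ _ _ (ih k N)

namespace AStar

theorem push_left {N N' : Tm Loc Ch} (h : AStar N N') (a : Loc) (M : Tm Loc Ch) :
    AStar (Tm.push N a M) (Tm.push N' a M) :=
  Relation.ReflTransGen.lift (fun X => Tm.push X a M) (fun _ _ s => AffStep.push_left _ _ a M s) _ _ h

theorem push_right (N : Tm Loc Ch) (a : Loc) {M M' : Tm Loc Ch} (h : AStar M M') :
    AStar (Tm.push N a M) (Tm.push N a M') :=
  Relation.ReflTransGen.lift (fun X => Tm.push N a X) (fun _ _ s => AffStep.push_right N a _ _ s) _ _ h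

theorem push {N N' M M' : Tm Loc Ch} (hN : AStar N N') (a : Loc) (hM : AStar M M') :
    AStar (Tm.push N a M) (Tm.push N' a M') :=
  (push_left hN a M).trans (push_right N' a hM)

theorem pop (a : Loc) {M M' : Tm Loc Ch} (h : AStar M M') :
    AStar (Tm.pop a M) (Tm.pop a M') :=
  Relation.ReflTransGen.lift (fun X => Tm.pop a X) (fun _ _ s => AffStep.pop_body a _ _ s) _ _ h

theorem case_left {M M' : Tm Loc Ch} (h : AStar M M') (i : Ch) (N : Tm Loc Ch) :
    AStar (Tm.caseOf M i N) (Tm.caseOf M' i N) :=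
  Relation.ReflTransGen.lift (fun X => Tm.caseOf X i N) (fun _ _ s => AffStep.case_left _ _ i N s) _ _ h

theorem case_right (M : Tm Loc Ch) (i : Ch) {N N' : Tm Loc Ch} (h : AStar N N') :
    AStar (Tm.caseOf M i N) (Tm.caseOf M i N') :=
  Relation.ReflTransGen.lift (fun X => Tm.caseOf M i X) (fun _ _ s => AffStep.case_right M i _ _ s) _ _ h

theorem caseOf {M M' N N' : Tm Loc Ch} (hM : AStar M M') (i : Ch) (hN : AStar N N') :
    AStar (Tm.caseOf M i N) (Tm.caseOf M' i N') :=
  (case_left hM i N).trans (case_right M' i hN)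

theorem loop {M M' : Tm Loc Ch} (h : AStar M M') (i : Ch) :
    AStar (Tm.loop M i) (Tm.loop M' i) :=
  Relation.ReflTransGen.lift (fun X => Tm.loop X i) (fun _ _ s => AffStep.loop_body _ _ i s) _ _ h

theorem lift {M M' : Tm Loc Ch} (h : AStar M M') (d : ℕ) :
    AStar (M.lift d) (M'.lift d) :=
  Relation.ReflTransGen.lift (fun X => Tm.lift X d) (fun _ _ s => AffStep.lift s d) _ _ h

theorem subst_left {M M' : Tm Loc Ch} (h : AStar M M') (k : ℕ) (N : Tm Loc Ch) :
    AStar (M.subst k N) (M'.subst k N) :=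
  Relation.ReflTransGen.lift (fun X => Tm.subst X k N) (fun _ _ s => AffStep.subst_left s k N) _ _ h

end AStar

/-- Affine star in the substituted term. -/
theorem AStar.subst_right (M : Tm Loc Ch) : ∀ k {N N' : Tm Loc Ch}, AStar N N' →
    AStar (M.subst k N) (M.subst k N') := by
  induction M with
  | var n =>
      intro k N N' h
      simp only [Tm.subst]
      split_ifs <;> first | exact h | exact Relation.ReflTransGen.refl
  | push P a M ihP ihM => intro k N N' h; exact AStar.push (ihP k h) a (ihM k h)
  | pop a M ih => intro k N N' h; exact AStar.pop a (ih (k+1) (h.lift 0))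
  | choice i => intro k N N' h; exact Relation.ReflTransGen.refl
  | caseOf M i P ihM ihP => intro k N N' h; exact AStar.caseOf (ihM k h) i (ihP k h)
  | loop M i ih => intro k N N' h; exact AStar.loop (ih k h) i
namespace Tm

/-- Termination weight for affine reduction. -/
def wt : Tm Loc Ch → ℕ
  | var _ => 2
  | choice _ => 2
  | push N _ M => N.wt + 2 * M.wt
  | pop _ M => M.wt + 1
  | caseOf M _ N => M.wt * (N.wt + 1)
  | loop M _ => M.wt + 1

theorem wt_pos (M : Tm Loc Ch) : 2 ≤ M.wt := by
  induction M with
  | var n => simp [wt]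
  | choice i => simp [wt]
  | push N a M ihN ihM => simp only [wt]; omega
  | pop a M ih => simp only [wt]; omega
  | caseOf M i N ihM ihN => simp only [wt]; nlinarith
  | loop M i ih => simp only [wt]; omega

theorem wt_lift (M : Tm Loc Ch) : ∀ d, (M.lift d).wt = M.wt := by
  induction M with
  | var n => intro d; simp only [lift]; split_ifs <;> rfl
  | push N a M ihN ihM => intro d; simp [lift, wt, ihN, ihM]
  | pop a M ih => intro d; simp [lift, wt, ih]
  | choice i => intro d; rfl
  | caseOf M i N ihM ihN => intro d; simp [lift, wt, ihM, ihN]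
  | loop M i ih => intro d; simp [lift, wt, ih]

end Tm

theorem AffStep.wt_lt {M N : Tm Loc Ch} (h : AffStep M N) : N.wt < M.wt := by
  induction h with
  | passage N a b M hab => simp only [Tm.wt, Tm.wt_lift]; omega
  | select i M => have := M.wt_pos; simp only [Tm.wt]; omega
  | reject i j M hij => have := M.wt_pos; simp only [Tm.wt]; nlinarith
  | prefixPop a N i M =>
      have hN := N.wt_pos; have hM := M.wt_pos
      simp only [Tm.wt, Tm.wt_lift]; nlinarith
  | prefixPush P a N i M =>
      have hP := P.wt_pos; have hM := M.wt_pos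
      simp only [Tm.wt]; nlinarith
  | assoc P i N M =>
      have hP := P.wt_pos; have hM := M.wt_pos
      simp only [Tm.wt]; nlinarith
  | push_left N N' a M h ih => simp only [Tm.wt]; omega
  | push_right N a M M' h ih => simp only [Tm.wt]; omega
  | pop_body a M M' h ih => simp only [Tm.wt]; omega
  | case_left M M' i N h ih => have := N.wt_pos; simp only [Tm.wt]; nlinarith
  | case_right M i N N' h ih => have := M.wt_pos; simp only [Tm.wt]; nlinarith
  | loop_body M M' i h ih => simp only [Tm.wt]; omega

theorem AStar.wt_le {M N : Tm Loc Ch} (h : AStar M N) : N.wt ≤ M.wt := by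
  induction h with
  | refl => exact le_rfl
  | tail _ s ih => exact le_trans (le_of_lt s.wt_lt) ih
theorem affstep_choice_inv {i : Ch} {X : Tm Loc Ch} (h : AffStep (.choice i) X) : False := by
  cases h

theorem affstep_pop_inv {a : Loc} {M X : Tm Loc Ch} (h : AffStep (.pop a M) X) :
    ∃ M', X = .pop a M' ∧ AffStep M M' := by
  cases h with
  | pop_body _ _ M' h => exact ⟨M', rfl, h⟩

theorem join_passage {N M : Tm Loc Ch} {a b : Loc} (hab : a ≠ b) {N2 : Tm Loc Ch}
    (h2 : AffStep (.push N b (.pop a M)) N2) :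
    ∃ P, AStar (Tm.pop a (.push (N.lift 0) b M)) P ∧ AStar N2 P := by
  cases h2 with
  | passage => exact ⟨_, .refl, .refl⟩
  | push_left _ N' _ _ h =>
      exact ⟨.pop a (.push (N'.lift 0) b M),
        AStar.pop a (AStar.push_left (.single (h.lift 0)) b M),
        .single (AffStep.passage N' a b M hab)⟩
  | push_right _ _ _ M₁ h =>
      obtain ⟨M', rfl, hM⟩ := affstep_pop_inv h
      exact ⟨.pop a (.push (N.lift 0) b M'),
        AStar.pop a (AStar.push_right _ b (.single hM)),
        .single (AffStep.passage N a b M' hab)⟩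

theorem join_select {i : Ch} {M N2 : Tm Loc Ch}
    (h2 : AffStep (.caseOf (.choice i) i M) N2) :
    ∃ P, AStar M P ∧ AStar N2 P := by
  cases h2 with
  | select => exact ⟨M, .refl, .refl⟩
  | reject _ _ _ h => exact absurd rfl h
  | case_left _ _ _ _ h => exact absurd h affstep_choice_inv
  | case_right _ _ _ N' h => exact ⟨N', .single h, .single (AffStep.select i N')⟩

theorem join_reject {i j : Ch} {M N2 : Tm Loc Ch} (hij : i ≠ j)
    (h2 : AffStep (.caseOf (.choice i) j M) N2) :
    ∃ P, AStar (Tm.choice i) P ∧ AStar N2 P := by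
  cases h2 with
  | select => exact absurd rfl hij
  | reject => exact ⟨_, .refl, .refl⟩
  | case_left _ _ _ _ h => exact absurd h affstep_choice_inv
  | case_right _ _ _ N' h => exact ⟨.choice i, .refl, .single (AffStep.reject i j N' hij)⟩

theorem join_prefixPop {a : Loc} {N M : Tm Loc Ch} {i : Ch} {N2 : Tm Loc Ch}
    (h2 : AffStep (.caseOf (.pop a N) i M) N2) :
    ∃ P, AStar (Tm.pop a (.caseOf N i (M.lift 0))) P ∧ AStar N2 P := by
  cases h2 with
  | prefixPop => exact ⟨_, .refl, .refl⟩
  | case_left _ _ _ _ h =>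
      obtain ⟨N', rfl, hN⟩ := affstep_pop_inv h
      exact ⟨.pop a (.caseOf N' i (M.lift 0)),
        AStar.pop a (AStar.case_left (.single hN) i _),
        .single (AffStep.prefixPop a N' i M)⟩
  | case_right _ _ _ M' h =>
      exact ⟨.pop a (.caseOf N i (M'.lift 0)),
        AStar.pop a (AStar.case_right _ i (.single (h.lift 0))),
        .single (AffStep.prefixPop a N i M')⟩

theorem join_prefixPush {P N M : Tm Loc Ch} {a : Loc} {i : Ch} {N2 : Tm Loc Ch}
    (h2 : AffStep (.caseOf (.push P a N) i M) N2) :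
    ∃ Q, AStar (Tm.push P a (.caseOf N i M)) Q ∧ AStar N2 Q := by
  cases h2 with
  | prefixPush => exact ⟨_, .refl, .refl⟩
  | case_left _ _ _ _ h =>
      cases h with
      | passage _ c _ N₀ hca =>
          refine ⟨.pop c (.push (P.lift 0) a (.caseOf N₀ i (M.lift 0))), ?_, ?_⟩
          · exact .head (AffStep.push_right _ _ _ _ (AffStep.prefixPop c N₀ i M))
              (.single (AffStep.passage P c a (.caseOf N₀ i (M.lift 0)) hca))
          · exact .head (AffStep.prefixPop c (.push (P.lift 0) a N₀) i M)
              (.single (AffStep.pop_body _ _ _ (AffStep.prefixPush (P.lift 0) a N₀ i (M.lift 0))))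
      | push_left _ P' _ _ h =>
          exact ⟨.push P' a (.caseOf N i M),
            .single (AffStep.push_left _ _ _ _ h),
            .single (AffStep.prefixPush P' a N i M)⟩
      | push_right _ _ _ N' h =>
          exact ⟨.push P a (.caseOf N' i M),
            .single (AffStep.push_right _ _ _ _ (AffStep.case_left _ _ _ _ h)),
            .single (AffStep.prefixPush P a N' i M)⟩
  | case_right _ _ _ M' h =>
      exact ⟨.push P a (.caseOf N i M'),
        .single (AffStep.push_right _ _ _ _ (AffStep.case_right _ _ _ _ h)),
        .single (AffStep.prefixPush P a N i M')⟩

theorem join_assoc {P N M : Tm Loc Ch} {i : Ch} {N2 : Tm Loc Ch}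
    (h2 : AffStep (.caseOf (.caseOf P i N) i M) N2) :
    ∃ Q, AStar (Tm.caseOf P i (.caseOf N i M)) Q ∧ AStar N2 Q := by
  cases h2 with
  | assoc => exact ⟨_, .refl, .refl⟩
  | case_left _ _ _ _ h =>
      cases h with
      | select =>
          exact ⟨.caseOf N i M, .single (AffStep.select i _), .refl⟩
      | reject _ _ _ hij =>
          exact ⟨.choice _, .single (AffStep.reject _ _ _ hij),
            .single (AffStep.reject _ _ _ hij)⟩
      | prefixPop c P₀ =>
          refine ⟨.pop c (.caseOf P₀ i (.caseOf (N.lift 0) i (M.lift 0))), ?_, ?_⟩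
          · exact .single (AffStep.prefixPop c P₀ i (.caseOf N i M))
          · exact .head (AffStep.prefixPop c (.caseOf P₀ i (N.lift 0)) i M)
              (.single (AffStep.pop_body _ _ _ (AffStep.assoc P₀ i (N.lift 0) (M.lift 0))))
      | prefixPush R c P₀ =>
          refine ⟨.push R c (.caseOf P₀ i (.caseOf N i M)), ?_, ?_⟩
          · exact .single (AffStep.prefixPush R c P₀ i (.caseOf N i M))
          · exact .head (AffStep.prefixPush R c (.caseOf P₀ i N) i M)
              (.single (AffStep.push_right _ _ _ _ (AffStep.assoc P₀ i N M)))
      | assoc P₁ _ P₀ =>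
          refine ⟨.caseOf P₁ i (.caseOf P₀ i (.caseOf N i M)), ?_, ?_⟩
          · exact .single (AffStep.assoc P₁ i P₀ (.caseOf N i M))
          · exact .head (AffStep.assoc P₁ i (.caseOf P₀ i N) M)
              (.single (AffStep.case_right _ _ _ _ (AffStep.assoc P₀ i N M)))
      | case_left _ P' _ _ h =>
          exact ⟨.caseOf P' i (.caseOf N i M),
            .single (AffStep.case_left _ _ _ _ h),
            .single (AffStep.assoc P' i N M)⟩
      | case_right _ _ _ N' h =>
          exact ⟨.caseOf P i (.caseOf N' i M),
            .single (AffStep.case_right _ _ _ _ (AffStep.case_left _ _ _ _ h)),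
            .single (AffStep.assoc P i N' M)⟩
  | case_right _ _ _ M' h =>
      exact ⟨.caseOf P i (.caseOf N i M'),
        .single (AffStep.case_right _ _ _ _ (AffStep.case_right _ _ _ _ h)),
        .single (AffStep.assoc P i N M')⟩

/-- Local confluence of affine reduction. -/
theorem aff_local_confluence {M N1 N2 : Tm Loc Ch}
    (h1 : AffStep M N1) (h2 : AffStep M N2) : ∃ P, AStar N1 P ∧ AStar N2 P := by
  induction h1 generalizing N2 with
  | passage N a b M hab => exact join_passage hab h2
  | select i M => exact join_select h2
  | reject i j M hij => exact join_reject hij h2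
  | prefixPop a N i M => exact join_prefixPop h2
  | prefixPush P a N i M => exact join_prefixPush h2
  | assoc P i N M => exact join_assoc h2
  | push_left N N' a M h ih =>
      cases h2 with
      | passage _ _ _ _ hab =>
          obtain ⟨P, s1, s2⟩ := join_passage hab (AffStep.push_left N N' _ _ h)
          exact ⟨P, s2, s1⟩
      | push_left _ N'' _ _ h' =>
          obtain ⟨P, s1, s2⟩ := ih h'
          exact ⟨.push P _ M, AStar.push_left s1 _ M, AStar.push_left s2 _ M⟩
      | push_right _ _ _ M' h' =>
          exact ⟨.push N' _ M',
            .single (AffStep.push_right _ _ _ _ h'),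
            .single (AffStep.push_left _ _ _ _ h)⟩
  | push_right N a M M' h ih =>
      cases h2 with
      | passage _ _ _ _ hab =>
          obtain ⟨P, s1, s2⟩ := join_passage hab (AffStep.push_right _ _ _ _ h)
          exact ⟨P, s2, s1⟩
      | push_left _ N' _ _ h' =>
          exact ⟨.push N' a M',
            .single (AffStep.push_left _ _ _ _ h'),
            .single (AffStep.push_right _ _ _ _ h)⟩
      | push_right _ _ _ M'' h' =>
          obtain ⟨P, s1, s2⟩ := ih h'
          exact ⟨.push N a P, AStar.push_right N a s1, AStar.push_right N a s2⟩
  | pop_body a M M' h ih =>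
      obtain ⟨M'', rfl, h'⟩ := affstep_pop_inv h2
      obtain ⟨P, s1, s2⟩ := ih h'
      exact ⟨.pop a P, AStar.pop a s1, AStar.pop a s2⟩
  | case_left M M' i N h ih =>
      cases h2 with
      | select => exact absurd h affstep_choice_inv
      | reject => exact absurd h affstep_choice_inv
      | prefixPop =>
          obtain ⟨P, s1, s2⟩ := join_prefixPop (AffStep.case_left _ _ _ _ h)
          exact ⟨P, s2, s1⟩
      | prefixPush =>
          obtain ⟨P, s1, s2⟩ := join_prefixPush (AffStep.case_left _ _ _ _ h)
          exact ⟨P, s2, s1⟩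
      | assoc =>
          obtain ⟨P, s1, s2⟩ := join_assoc (AffStep.case_left _ _ _ _ h)
          exact ⟨P, s2, s1⟩
      | case_left _ M'' _ _ h' =>
          obtain ⟨P, s1, s2⟩ := ih h'
          exact ⟨.caseOf P i N, AStar.case_left s1 i N, AStar.case_left s2 i N⟩
      | case_right _ _ _ N' h' =>
          exact ⟨.caseOf M' i N',
            .single (AffStep.case_right _ _ _ _ h'),
            .single (AffStep.case_left _ _ _ _ h)⟩
  | case_right M i N N' h ih =>
      cases h2 with
      | select => exact ⟨N', .single (AffStep.select i N'), .single h⟩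
      | reject _ _ _ hij =>
          exact ⟨.choice _, .single (AffStep.reject _ _ _ hij), .refl⟩
      | prefixPop =>
          obtain ⟨P, s1, s2⟩ := join_prefixPop (AffStep.case_right _ _ _ _ h)
          exact ⟨P, s2, s1⟩
      | prefixPush =>
          obtain ⟨P, s1, s2⟩ := join_prefixPush (AffStep.case_right _ _ _ _ h)
          exact ⟨P, s2, s1⟩
      | assoc =>
          obtain ⟨P, s1, s2⟩ := join_assoc (AffStep.case_right _ _ _ _ h)
          exact ⟨P, s2, s1⟩
      | case_left _ M' _ _ h' =>
          exact ⟨.caseOf M' i N',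
            .single (AffStep.case_left _ _ _ _ h'),
            .single (AffStep.case_right _ _ _ _ h)⟩
      | case_right _ _ _ N'' h' =>
          obtain ⟨P, s1, s2⟩ := ih h'
          exact ⟨.caseOf M i P, AStar.case_right M i s1, AStar.case_right M i s2⟩
  | loop_body M M' i h ih =>
      cases h2 with
      | loop_body _ M'' _ h' =>
          obtain ⟨P, s1, s2⟩ := ih h'
          exact ⟨.loop P i, AStar.loop s1 i, AStar.loop s2 i⟩
/-- Newman's lemma for affine reduction (using the weight measure). -/
theorem aff_confluence : ∀ n (M N1 N2 : Tm Loc Ch), M.wt ≤ n →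
    AStar M N1 → AStar M N2 → ∃ P, AStar N1 P ∧ AStar N2 P := by
  intro n
  induction n with
  | zero => intro M _ _ hw; exact absurd (le_trans M.wt_pos hw) (by omega)
  | succ n ih =>
      intro M N1 N2 hw h1 h2
      rcases Relation.ReflTransGen.cases_head h1 with rfl | ⟨M1, hM1, h1'⟩
      · exact ⟨N2, h2, .refl⟩
      rcases Relation.ReflTransGen.cases_head h2 with rfl | ⟨M2, hM2, h2'⟩
      · exact ⟨N1, .refl, h1⟩
      obtain ⟨Q, sQ1, sQ2⟩ := aff_local_confluence hM1 hM2
      have hw1 : M1.wt ≤ n := by have := hM1.wt_lt; omega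
      have hw2 : M2.wt ≤ n := by have := hM2.wt_lt; omega
      obtain ⟨R, sR1, sR2⟩ := ih M1 N1 Q hw1 h1' sQ1
      obtain ⟨S, sS1, sS2⟩ := ih M2 N2 (R) hw2 h2' (sQ2.trans sR2)
      exact ⟨S, sR1.trans sS2, sS1⟩

theorem astar_of_nf {P Q : Tm Loc Ch} (hP : ∀ X, ¬ AffStep P X) (h : AStar P Q) : P = Q := by
  rcases Relation.ReflTransGen.cases_head h with rfl | ⟨R, hR, _⟩
  · rfl
  · exact absurd hR (hP R)

/-- Uniqueness of affine normal forms. -/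
theorem affnf_unique {M P Q : Tm Loc Ch} (hP : AffNF M P) (hQ : AffNF M Q) : P = Q := by
  obtain ⟨R, sR1, sR2⟩ := aff_confluence M.wt M P Q le_rfl hP.1 hQ.1
  rw [astar_of_nf hP.2 sR1, astar_of_nf hQ.2 sR2]

/-- If `P` is reachable from `M` and `Q` is an affine NF of `M`, then `Q` is an NF of `P`. -/
theorem affnf_of_reachable {M P Q : Tm Loc Ch} (h : AStar M P) (hQ : AffNF M Q) : AffNF P Q := by
  obtain ⟨R, sR1, sR2⟩ := aff_confluence M.wt M P Q le_rfl h hQ.1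
  have : Q = R := astar_of_nf hQ.2 sR2
  exact ⟨this ▸ sR1, hQ.2⟩
theorem Par.refl : ∀ M : Tm Loc Ch, Par M M := by
  intro M
  induction M with
  | var n => exact Par.var n
  | push N a M ihN ihM => exact Par.push _ _ a _ _ ihN ihM
  | pop a M ih => exact Par.pop a _ _ ih
  | choice i => exact Par.choice i
  | caseOf M i N ihM ihN => exact Par.caseOf _ _ i _ _ ihM ihN
  | loop M i ih => exact Par.loop _ _ i ih

theorem Par.lift {M M' : Tm Loc Ch} (h : Par M M') : ∀ d, Par (M.lift d) (M'.lift d) := by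
  induction h with
  | var n => intro d; simp only [Tm.lift]; split_ifs <;> exact Par.var _
  | choice i => intro d; exact Par.choice i
  | push N N' a M M' hN hM ihN ihM => intro d; exact Par.push _ _ a _ _ (ihN d) (ihM d)
  | pop a M M' h ih => intro d; exact Par.pop a _ _ (ih (d+1))
  | caseOf M M' i N N' hM hN ihM ihN => intro d; exact Par.caseOf _ _ i _ _ (ihM d) (ihN d)
  | loop M M' i h ih => intro d; exact Par.loop _ _ i (ih d)
  | beta N N' a M M' hN hM ihN ihM =>
      intro d
      have := Par.beta (N.lift d) (N'.lift d) a (M.lift (d+1)) (M'.lift (d+1)) (ihN d) (ihM (d+1))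
      simpa [Tm.lift, Tm.lift_subst_high M' 0 N' d (by omega)] using this
  | unroll M M' i h ih => intro d; exact Par.unroll _ _ i (ih d)

/-- Every step is either an affine step or a parallel duplicating step. -/
theorem step_cases {M N : Tm Loc Ch} (h : Step M N) : AffStep M N ∨ Par M N := by
  induction h with
  | beta N a M => exact Or.inr (Par.beta N N a M M (Par.refl N) (Par.refl M))
  | passage N a b M hab => exact Or.inl (AffStep.passage N a b M hab)
  | select i M => exact Or.inl (AffStep.select i M)
  | reject i j M hij => exact Or.inl (AffStep.reject i j M hij)
  | prefixPop a N i M => exact Or.inl (AffStep.prefixPop a N i M)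
  | prefixPush P a N i M => exact Or.inl (AffStep.prefixPush P a N i M)
  | assoc P i N M => exact Or.inl (AffStep.assoc P i N M)
  | unroll M i => exact Or.inr (Par.unroll M M i (Par.refl M))
  | push_left N N' a M h ih =>
      rcases ih with h' | h'
      · exact Or.inl (AffStep.push_left _ _ _ _ h')
      · exact Or.inr (Par.push _ _ a _ _ h' (Par.refl M))
  | push_right N a M M' h ih =>
      rcases ih with h' | h'
      · exact Or.inl (AffStep.push_right _ _ _ _ h')
      · exact Or.inr (Par.push _ _ a _ _ (Par.refl N) h')
  | pop_body a M M' h ih =>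
      rcases ih with h' | h'
      · exact Or.inl (AffStep.pop_body _ _ _ h')
      · exact Or.inr (Par.pop a _ _ h')
  | case_left M M' i N h ih =>
      rcases ih with h' | h'
      · exact Or.inl (AffStep.case_left _ _ _ _ h')
      · exact Or.inr (Par.caseOf _ _ i _ _ h' (Par.refl N))
  | case_right M i N N' h ih =>
      rcases ih with h' | h'
      · exact Or.inl (AffStep.case_right _ _ _ _ h')
      · exact Or.inr (Par.caseOf _ _ i _ _ (Par.refl M) h')
  | loop_body M M' i h ih =>
      rcases ih with h' | h'
      · exact Or.inl (AffStep.loop_body _ _ _ h')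
      · exact Or.inr (Par.loop _ _ i h')
theorem astar_pop_inv {a : Loc} {M Y : Tm Loc Ch} (h : AStar (.pop a M) Y) :
    ∃ M', Y = .pop a M' ∧ AStar M M' := by
  induction h with
  | refl => exact ⟨M, rfl, .refl⟩
  | tail _ s ih =>
      obtain ⟨M', rfl, sM⟩ := ih
      obtain ⟨M'', rfl, s'⟩ := affstep_pop_inv s
      exact ⟨M'', rfl, sM.tail s'⟩

/-- Key commutation: an affine step followed by a parallel step can be
rearranged into affine steps, a parallel step, and affine steps. -/
theorem aff_par_commute {M M' N : Tm Loc Ch} (h : AffStep M M') (hp : Par M N) :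
    ∃ M'' N', AStar M' M'' ∧ Par M'' N' ∧ AStar N N' := by
  induction h generalizing N with
  | passage N₀ a b M hab =>
      cases hp with
      | push _ N₀' _ _ X hN hX =>
          cases hX with
          | pop _ _ M' hM =>
              exact ⟨_, .pop a (.push (N₀'.lift 0) b M'), .refl,
                Par.pop a _ _ (Par.push _ _ b _ _ (hN.lift 0) hM),
                .single (AffStep.passage N₀' a b M' hab)⟩
      | beta _ N₀' _ _ M' hN hM => exact absurd rfl hab
  | select i M =>
      cases hp with
      | caseOf _ X _ _ M' hc hM =>
          cases hc
          exact ⟨M, M', .refl, hM, .single (AffStep.select i M')⟩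
  | reject i j M hij =>
      cases hp with
      | caseOf _ X _ _ M' hc hM =>
          cases hc
          exact ⟨.choice i, .choice i, .refl, Par.choice i,
            .single (AffStep.reject i j M' hij)⟩
  | prefixPop a Q i R =>
      cases hp with
      | caseOf _ X _ _ R' hX hR =>
          cases hX with
          | pop _ _ Q' hQ =>
              exact ⟨_, .pop a (.caseOf Q' i (R'.lift 0)), .refl,
                Par.pop a _ _ (Par.caseOf _ _ i _ _ hQ (hR.lift 0)),
                .single (AffStep.prefixPop a Q' i R')⟩
  | prefixPush P a Q i R =>
      cases hp with
      | caseOf _ X _ _ R' hX hR =>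
          cases hX with
          | push _ P' _ _ Q' hP hQ =>
              exact ⟨_, .push P' a (.caseOf Q' i R'), .refl,
                Par.push _ _ a _ _ hP (Par.caseOf _ _ i _ _ hQ hR),
                .single (AffStep.prefixPush P' a Q' i R')⟩
          | beta _ P' _ Q₀ Q₀' hP hQ =>
              refine ⟨.push P a (.pop a (.caseOf Q₀ i (R.lift 0))),
                .caseOf (Q₀'.subst 0 P') i R',
                .single (AffStep.push_right _ _ _ _ (AffStep.prefixPop a Q₀ i R)), ?_, .refl⟩
              have := Par.beta P P' a (.caseOf Q₀ i (R.lift 0)) (.caseOf Q₀' i (R'.lift 0))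
                hP (Par.caseOf _ _ i _ _ hQ (hR.lift 0))
              simpa [Tm.subst, Tm.subst_lift_self] using this
  | assoc P i Q R =>
      cases hp with
      | caseOf _ X _ _ R' hX hR =>
          cases hX with
          | caseOf _ P' _ _ Q' hP hQ =>
              exact ⟨_, .caseOf P' i (.caseOf Q' i R'), .refl,
                Par.caseOf _ _ i _ _ hP (Par.caseOf _ _ i _ _ hQ hR),
                .single (AffStep.assoc P' i Q' R')⟩
  | push_left P P₁ a Q h ih =>
      cases hp with
      | push _ P' _ _ Q' hP hQ =>
          obtain ⟨P₂, P₃, s1, h23, s2⟩ := ih hP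
          exact ⟨.push P₂ a Q, .push P₃ a Q', AStar.push_left s1 a Q,
            Par.push _ _ a _ _ h23 hQ, AStar.push_left s2 a Q'⟩
      | beta _ P' _ Q₀ Q₀' hP hQ =>
          obtain ⟨P₂, P₃, s1, h23, s2⟩ := ih hP
          exact ⟨.push P₂ a (.pop a Q₀), Q₀'.subst 0 P₃,
            AStar.push_left s1 a _,
            Par.beta P₂ P₃ a Q₀ Q₀' h23 hQ,
            AStar.subst_right Q₀' 0 s2⟩
  | push_right P a Q Q₁ h ih =>
      cases hp with
      | push _ P' _ _ Q' hP hQ =>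
          obtain ⟨Q₂, Q₃, s1, h23, s2⟩ := ih hQ
          exact ⟨.push P a Q₂, .push P' a Q₃, AStar.push_right P a s1,
            Par.push _ _ a _ _ hP h23, AStar.push_right P' a s2⟩
      | beta _ P' _ Q₀ Q₀' hP hQ =>
          obtain ⟨Q₂, Q₃, s1, h23, s2⟩ := ih (Par.pop a Q₀ Q₀' hQ)
          obtain ⟨Q₀₁, rfl, sQ1⟩ := affstep_pop_inv h
          obtain ⟨Q₀₂, rfl, sQ2⟩ := astar_pop_inv s1
          obtain ⟨Q₀₃, rfl, sQ3⟩ := astar_pop_inv s2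
          cases h23 with
          | pop _ _ _ h23' =>
              exact ⟨.push P a (.pop a Q₀₂), Q₀₃.subst 0 P',
                AStar.push_right P a (AStar.pop a sQ2),
                Par.beta P P' a Q₀₂ Q₀₃ hP h23',
                AStar.subst_left sQ3 0 P'⟩
  | pop_body a Q Q₁ h ih =>
      cases hp with
      | pop _ _ Q' hQ =>
          obtain ⟨Q₂, Q₃, s1, h23, s2⟩ := ih hQ
          exact ⟨.pop a Q₂, .pop a Q₃, AStar.pop a s1, Par.pop a _ _ h23, AStar.pop a s2⟩
  | case_left S S₁ i R h ih =>
      cases hp with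
      | caseOf _ S' _ _ R' hS hR =>
          obtain ⟨S₂, S₃, s1, h23, s2⟩ := ih hS
          exact ⟨.caseOf S₂ i R, .caseOf S₃ i R', AStar.case_left s1 i R,
            Par.caseOf _ _ i _ _ h23 hR, AStar.case_left s2 i R'⟩
  | case_right S i R R₁ h ih =>
      cases hp with
      | caseOf _ S' _ _ R' hS hR =>
          obtain ⟨R₂, R₃, s1, h23, s2⟩ := ih hR
          exact ⟨.caseOf S i R₂, .caseOf S' i R₃, AStar.case_right S i s1,
            Par.caseOf _ _ i _ _ hS h23, AStar.case_right S' i s2⟩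
  | loop_body Q Q₁ i h ih =>
      cases hp with
      | loop _ Q' _ hQ =>
          obtain ⟨Q₂, Q₃, s1, h23, s2⟩ := ih hQ
          exact ⟨.loop Q₂ i, .loop Q₃ i, AStar.loop s1 i, Par.loop _ _ i h23, AStar.loop s2 i⟩
      | unroll _ Q' _ hQ =>
          obtain ⟨Q₂, Q₃, s1, h23, s2⟩ := ih hQ
          exact ⟨.loop Q₂ i, .caseOf Q₃ i (.loop Q₃ i), AStar.loop s1 i,
            Par.unroll _ _ i h23, AStar.caseOf s2 i (AStar.loop s2 i)⟩

/-- Parallel reduction commutes with affine normalization. -/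
theorem par_to_nf : ∀ n (M N Ma : Tm Loc Ch), M.wt ≤ n → Par M N → AffNF M Ma →
    ∃ P, Par Ma P ∧ AStar N P := by
  intro n
  induction n with
  | zero => intro M _ _ hw; exact absurd (le_trans M.wt_pos hw) (by omega)
  | succ n ih =>
      intro M N Ma hw hp hnf
      rcases Relation.ReflTransGen.cases_head hnf.1 with rfl | ⟨M₁, hM1, h1'⟩
      · exact ⟨N, hp, .refl⟩
      obtain ⟨M'', N', s1, h'', s2⟩ := aff_par_commute hM1 hp
      have hnf'' : AffNF M'' Ma := affnf_of_reachable s1 ⟨h1', hnf.2⟩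
      have hw'' : M''.wt ≤ n := by
        have l1 := s1.wt_le; have l2 := hM1.wt_lt; omega
      obtain ⟨P, hPar, sP⟩ := ih M'' N' Ma hw'' h'' hnf''
      exact ⟨P, hPar, s2.trans sP⟩
/-- Affine normalization maps a reduction step to a complete reduction step. -/
theorem affnf_maps_step_to_complete (M N Ma Na : Tm Loc Ch) (h : Step M N)
    (hMa : AffNF M Ma) (hNa : AffNF N Na) : Comp Ma Na := by
  rcases step_cases h with haff | hpar
  · have hNa' : AffNF M Na := ⟨.head haff hNa.1, hNa.2⟩
    have : Ma = Na := affnf_unique hMa hNa'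
    subst this
    exact ⟨Ma, Par.refl Ma, .refl, hNa.2⟩
  · obtain ⟨P, hP, sNP⟩ := par_to_nf M.wt M N Ma le_rfl hpar hMa
    exact ⟨P, hP, affnf_of_reachable sNP hNa⟩
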